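/- Let L/K be a finite Galois field extension and let G be a group acting on L via a surjective homomorphism σ : G → Gal(L/K) with kernel H. Then the inclusion of K-algebras L[H] ↪ L ⋊ G is a Frobenius extension: there is an (L[H], L[H])-bimodule homomorphism E : L ⋊ G → L[H] and elements x₁,…,xₙ, y₁,…,yₙ ∈ L ⋊ G with Σᵢ E(s·xᵢ)yᵢ = s = Σᵢ xᵢE(yᵢ·s) for all s ∈ L ⋊ G. -/

import Mathlib

open Finsupp

variable {K L : Type*} [Field K] [Field L] [Algebra K L]
variable {G : Type*} [Group G]

/-- The multiplication of the skew group ring `L ⋊ G` modelled on `G →₀ L`. -/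
noncomputable def skewMul (σ : G →* (L ≃ₐ[K] L)) (x y : G →₀ L) : G →₀ L :=
  x.sum fun g₁ r₁ => y.sum fun g₂ r₂ => Finsupp.single (g₁ * g₂) (r₁ * σ g₁ r₂)

/-- The inclusion `L[H] ↪ L ⋊ G` of the group algebra of `H = ker σ`. -/
noncomputable def inclH (σ : G →* (L ≃ₐ[K] L)) (a : MonoidAlgebra L σ.ker) : G →₀ L :=
  Finsupp.mapDomain (fun h : σ.ker => (h : G)) a.coeff

lemma skewMul_single (σ : G →* (L ≃ₐ[K] L)) (g₁ g₂ : G) (r₁ r₂ : L) :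
    skewMul σ (single g₁ r₁) (single g₂ r₂) = single (g₁ * g₂) (r₁ * σ g₁ r₂) := by
  unfold skewMul
  rw [Finsupp.sum_single_index, Finsupp.sum_single_index] <;> simp

lemma skewMul_zero_left (σ : G →* (L ≃ₐ[K] L)) (y : G →₀ L) : skewMul σ 0 y = 0 :=
  Finsupp.sum_zero_index

lemma skewMul_zero_right (σ : G →* (L ≃ₐ[K] L)) (x : G →₀ L) : skewMul σ x 0 = 0 := by
  unfold skewMul
  simp [Finsupp.sum_zero_index]

lemma skewMul_add_left (σ : G →* (L ≃ₐ[K] L)) (x₁ x₂ y : G →₀ L) :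
    skewMul σ (x₁ + x₂) y = skewMul σ x₁ y + skewMul σ x₂ y := by
  classical
  unfold skewMul
  rw [Finsupp.sum_add_index]
  · intro g _
    simp
  · intro g _ b₁ b₂
    rw [← Finsupp.sum_add]
    exact Finsupp.sum_congr fun g₂ _ => by rw [add_mul, single_add]

lemma skewMul_add_right (σ : G →* (L ≃ₐ[K] L)) (x y₁ y₂ : G →₀ L) :
    skewMul σ x (y₁ + y₂) = skewMul σ x y₁ + skewMul σ x y₂ := by
  classical
  unfold skewMul
  rw [← Finsupp.sum_add]
  refine Finsupp.sum_congr fun g₁ _ => ?_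
  rw [Finsupp.sum_add_index]
  · intro g _
    simp
  · intro g _ b₁ b₂
    rw [map_add, mul_add, single_add]

/-- The projection `L ⋊ G → L[H]`. -/
noncomputable def projE (σ : G →* (L ≃ₐ[K] L)) : (G →₀ L) →+ MonoidAlgebra L σ.ker :=
  (MonoidAlgebra.coeffAddEquiv.symm.toAddMonoidHom).comp
    (Finsupp.comapDomain.addMonoidHom (f := (Subtype.val : σ.ker → G)) Subtype.val_injective)

lemma projE_single_mem (σ : G →* (L ≃ₐ[K] L)) {g : G} (hg : g ∈ σ.ker) (r : L) :
    projE σ (single g r) = MonoidAlgebra.single (⟨g, hg⟩ : σ.ker) r := by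
  have : (single g r : G →₀ L) = single ((⟨g, hg⟩ : σ.ker) : G) r := rfl
  show MonoidAlgebra.ofCoeff (Finsupp.comapDomain _ (single g r) _) = _
  rw [this, Finsupp.comapDomain_single, MonoidAlgebra.ofCoeff_single]

lemma projE_single_not_mem (σ : G →* (L ≃ₐ[K] L)) {g : G} (hg : g ∉ σ.ker) (r : L) :
    projE σ (single g r) = 0 := by
  classical
  ext a
  show Finsupp.comapDomain _ (single g r) _ a = _
  rw [Finsupp.comapDomain_apply]
  have : g ≠ (a : G) := fun h => hg (h ▸ a.2)
  simp [Finsupp.single_apply, this]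

lemma inclH_single (σ : G →* (L ≃ₐ[K] L)) (h : σ.ker) (r : L) :
    inclH σ (MonoidAlgebra.single h r) = single (h : G) r :=
  Finsupp.mapDomain_single

lemma inclH_zero (σ : G →* (L ≃ₐ[K] L)) : inclH σ 0 = 0 := Finsupp.mapDomain_zero

lemma inclH_add (σ : G →* (L ≃ₐ[K] L)) (a b : MonoidAlgebra L σ.ker) :
    inclH σ (a + b) = inclH σ a + inclH σ b := Finsupp.mapDomain_add

lemma key1 (σ : G →* (L ≃ₐ[K] L)) (a b : MonoidAlgebra L σ.ker) (s : G →₀ L) :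
    projE σ (skewMul σ (skewMul σ (inclH σ a) s) (inclH σ b)) = a * projE σ s * b := by
  classical
  induction a using MonoidAlgebra.induction_linear with
  | zero => rw [inclH_zero, skewMul_zero_left, skewMul_zero_left, map_zero, zero_mul, zero_mul]
  | add a₁ a₂ ih₁ ih₂ =>
      rw [inclH_add, skewMul_add_left, skewMul_add_left, map_add, ih₁, ih₂, add_mul, add_mul]
  | single h₁ r₁ =>
    induction b using MonoidAlgebra.induction_linear with
    | zero => rw [inclH_zero, skewMul_zero_right, map_zero, mul_zero]
    | add b₁ b₂ ih₁ ih₂ =>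
        rw [inclH_add, skewMul_add_right, map_add, ih₁, ih₂, mul_add]
    | single h₂ r₂ =>
      induction s using Finsupp.induction_linear with
      | zero =>
          rw [skewMul_zero_right, skewMul_zero_left, map_zero, mul_zero, zero_mul]
      | add s₁ s₂ ih₁ ih₂ =>
          rw [skewMul_add_right, skewMul_add_left, map_add, map_add, ih₁, ih₂]
          rw [mul_add, add_mul]
      | single g r =>
        rw [inclH_single, inclH_single, skewMul_single, skewMul_single]
        have e1 : σ (h₁ : G) = 1 := h₁.2
        by_cases hg : g ∈ σ.ker
        · have hm : (h₁ : G) * g * (h₂ : G) ∈ σ.ker := mul_mem (mul_mem h₁.2 hg) h₂.2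
          rw [projE_single_mem σ hm, projE_single_mem σ hg,
            MonoidAlgebra.single_mul_single, MonoidAlgebra.single_mul_single]
          have e2 : σ g = 1 := hg
          congr 1
          simp [map_mul, AlgEquiv.mul_apply, e1, e2, mul_assoc]
        · have hm : (h₁ : G) * g * (h₂ : G) ∉ σ.ker := by
            intro hmem
            apply hg
            have : ((h₁ : G))⁻¹ * ((h₁ : G) * g * (h₂ : G)) * ((h₂ : G))⁻¹ ∈ σ.ker :=
              mul_mem (mul_mem (inv_mem h₁.2) hmem) (inv_mem h₂.2)
            simpa [mul_assoc] using this
          rw [projE_single_not_mem σ hm, projE_single_not_mem σ hg, mul_zero, zero_mul]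

lemma sigma_inv_apply (σ : G →* (L ≃ₐ[K] L)) (u : G) (v : L) : σ u⁻¹ (σ u v) = v := by
  rw [← AlgEquiv.mul_apply, ← map_mul, inv_mul_cancel, map_one, AlgEquiv.one_apply]

lemma key2 (σ : G →* (L ≃ₐ[K] L)) [Fintype (L ≃ₐ[K] L)]
    (t : (L ≃ₐ[K] L) → G) (ht : ∀ φ, σ (t φ) = φ) (s : G →₀ L) :
    ∑ φ : (L ≃ₐ[K] L),
      skewMul σ (inclH σ (projE σ (skewMul σ s (single (t φ)⁻¹ 1)))) (single (t φ) 1) = s := by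
  classical
  induction s using Finsupp.induction_linear with
  | zero => simp [skewMul_zero_left, inclH_zero]
  | add s₁ s₂ ih₁ ih₂ =>
      calc ∑ φ : (L ≃ₐ[K] L),
            skewMul σ (inclH σ (projE σ (skewMul σ (s₁ + s₂) (single (t φ)⁻¹ 1)))) (single (t φ) 1)
          = ∑ φ : (L ≃ₐ[K] L),
            (skewMul σ (inclH σ (projE σ (skewMul σ s₁ (single (t φ)⁻¹ 1)))) (single (t φ) 1) +
             skewMul σ (inclH σ (projE σ (skewMul σ s₂ (single (t φ)⁻¹ 1)))) (single (t φ) 1)) := by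
            refine Finset.sum_congr rfl fun φ _ => ?_
            rw [skewMul_add_left, map_add, inclH_add, skewMul_add_left]
        _ = s₁ + s₂ := by rw [Finset.sum_add_distrib, ih₁, ih₂]
  | single g r =>
      rw [Finset.sum_eq_single (σ g)]
      · have hm : g * (t (σ g))⁻¹ ∈ σ.ker := by
          rw [MonoidHom.mem_ker, map_mul, map_inv, ht, mul_inv_cancel]
        rw [skewMul_single]
        rw [show (σ g) (1 : L) = 1 from map_one _, mul_one,
          projE_single_mem σ hm, inclH_single, skewMul_single]
        rw [show (σ (g * (t (σ g))⁻¹)) (1 : L) = 1 from map_one _, mul_one,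
          inv_mul_cancel_right]
      · intro φ _ hφ
        have hn : g * (t φ)⁻¹ ∉ σ.ker := by
          intro hmem
          rw [MonoidHom.mem_ker, map_mul, map_inv, ht] at hmem
          exact hφ (mul_inv_eq_one.mp hmem).symm
        rw [skewMul_single, show (σ g) (1 : L) = 1 from map_one _, mul_one,
          projE_single_not_mem σ hn, inclH_zero, skewMul_zero_left]
      · intro h
        exact absurd (Finset.mem_univ _) h

lemma key3 (σ : G →* (L ≃ₐ[K] L)) [Fintype (L ≃ₐ[K] L)]
    (t : (L ≃ₐ[K] L) → G) (ht : ∀ φ, σ (t φ) = φ) (s : G →₀ L) :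
    ∑ φ : (L ≃ₐ[K] L),
      skewMul σ (single (t φ)⁻¹ 1) (inclH σ (projE σ (skewMul σ (single (t φ) 1) s))) = s := by
  classical
  induction s using Finsupp.induction_linear with
  | zero => simp [skewMul_zero_right, inclH_zero]
  | add s₁ s₂ ih₁ ih₂ =>
      calc ∑ φ : (L ≃ₐ[K] L),
            skewMul σ (single (t φ)⁻¹ 1) (inclH σ (projE σ (skewMul σ (single (t φ) 1) (s₁ + s₂))))
          = ∑ φ : (L ≃ₐ[K] L),
            (skewMul σ (single (t φ)⁻¹ 1) (inclH σ (projE σ (skewMul σ (single (t φ) 1) s₁))) +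
             skewMul σ (single (t φ)⁻¹ 1) (inclH σ (projE σ (skewMul σ (single (t φ) 1) s₂)))) := by
            refine Finset.sum_congr rfl fun φ _ => ?_
            rw [skewMul_add_right, map_add, inclH_add, skewMul_add_right]
        _ = s₁ + s₂ := by rw [Finset.sum_add_distrib, ih₁, ih₂]
  | single g r =>
      rw [Finset.sum_eq_single ((σ g)⁻¹)]
      · have hm : t (σ g)⁻¹ * g ∈ σ.ker := by
          rw [MonoidHom.mem_ker, map_mul, ht, inv_mul_cancel]
        rw [skewMul_single, one_mul, projE_single_mem σ hm, inclH_single, skewMul_single,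
          one_mul, sigma_inv_apply, inv_mul_cancel_left]
      · intro φ _ hφ
        have hn : t φ * g ∉ σ.ker := by
          intro hmem
          rw [MonoidHom.mem_ker, map_mul, ht] at hmem
          exact hφ (eq_inv_of_mul_eq_one_left hmem)
        rw [skewMul_single, one_mul, projE_single_not_mem σ hn, inclH_zero, skewMul_zero_right]
      · intro h
        exact absurd (Finset.mem_univ _) h

/-- Let `L/K` be a finite Galois field extension and `G` a group acting
on `L` via a surjective homomorphism `σ : G → Gal(L/K)` with kernel `H`.  Then
`L[H] ↪ L ⋊ G` is a Frobenius extension: there is an `(L[H], L[H])`-bimodule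
homomorphism `E : L ⋊ G → L[H]` and elements `x₁,…,xₙ, y₁,…,yₙ ∈ L ⋊ G` with
`Σᵢ E(s·xᵢ)·yᵢ = s = Σᵢ xᵢ·E(yᵢ·s)` for all `s ∈ L ⋊ G`. -/
theorem stmt2 [FiniteDimensional K L] [IsGalois K L]
    (σ : G →* (L ≃ₐ[K] L)) (hσ : Function.Surjective σ) :
    ∃ (E : (G →₀ L) →+ MonoidAlgebra L σ.ker) (n : ℕ)
      (x y : Fin n → (G →₀ L)),
      (∀ (a b : MonoidAlgebra L σ.ker) (s : G →₀ L),
        E (skewMul σ (skewMul σ (inclH σ a) s) (inclH σ b)) = a * E s * b) ∧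
      (∀ s : G →₀ L,
        ∑ i : Fin n, skewMul σ (inclH σ (E (skewMul σ s (x i)))) (y i) = s) ∧
      (∀ s : G →₀ L,
        ∑ i : Fin n, skewMul σ (x i) (inclH σ (E (skewMul σ (y i) s))) = s) := by
  classical
  set t : (L ≃ₐ[K] L) → G := Function.surjInv hσ with ht_def
  have ht : ∀ φ, σ (t φ) = φ := fun φ => Function.surjInv_eq hσ φ
  set e : Fin (Fintype.card (L ≃ₐ[K] L)) ≃ (L ≃ₐ[K] L) := (Fintype.equivFin _).symm with he
  refine ⟨projE σ, Fintype.card (L ≃ₐ[K] L),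
    fun i => single (t (e i))⁻¹ 1, fun i => single (t (e i)) 1,
    fun a b s => key1 σ a b s, fun s => ?_, fun s => ?_⟩
  · rw [Equiv.sum_comp e
      (fun φ => skewMul σ (inclH σ (projE σ (skewMul σ s (single (t φ)⁻¹ 1)))) (single (t φ) 1))]
    exact key2 σ t ht s
  · rw [Equiv.sum_comp e
      (fun φ => skewMul σ (single (t φ)⁻¹ 1) (inclH σ (projE σ (skewMul σ (single (t φ) 1) s))))]
    exact key3 σ t ht s
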